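/- Let K be an Archimedean linearly ordered field, and let K₊ := {c : K // 0 ≤ c} be its nonnegative cone, a commutative semiring under the induced operations. For n : ℕ, a function φ : (Fin n → K₊) → K₊ preserves K₊-convex combinations — i.e. for every j : ℕ, every a : Fin j → K₊ with ∑ k, a k = 1, and every family x : Fin j → (Fin n → K₊) one has φ (fun i => ∑ k, a k * x k i) = ∑ k, a k * φ (x k) — if and only if there exist u₀ : K₊ and u : Fin n → K₊ with φ x = u₀ + ∑ i, u i * x i for all x; moreover such a pair (u₀, u) is unique. -/

import Mathlib

section Aux

variable {K : Type*} [Field K] [LinearOrder K] [IsStrictOrderedRing K] [Archimedean K] {n : ℕ}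

omit [Archimedean K] in
private lemma stmt2_coe_sum {m : Type*} [Fintype m] (f : m → {c : K // 0 ≤ c}) :
    ((∑ k, f k : {c : K // 0 ≤ c}) : K) = ∑ k, (f k : K) :=
  map_sum (Nonneg.coeRingHom : {c : K // 0 ≤ c} →+* K) f Finset.univ

private lemma stmt2_main (φ : (Fin n → {c : K // 0 ≤ c}) → {c : K // 0 ≤ c})
    (H : ∀ (j : ℕ) (a : Fin j → {c : K // 0 ≤ c}), (∑ k, a k) = 1 →
        ∀ x : Fin j → (Fin n → {c : K // 0 ≤ c}),
          φ (fun i => ∑ k, a k * x k i) = ∑ k, a k * φ (x k)) :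
    ∃ (u₀ : {c : K // 0 ≤ c}) (u : Fin n → {c : K // 0 ≤ c}),
      ∀ x, φ x = u₀ + ∑ i, u i * x i := by
  -- pairwise convex combinations
  have hpair : ∀ a b : {c : K // 0 ≤ c}, (a : K) + b = 1 →
      ∀ x y : Fin n → {c : K // 0 ≤ c},
      ((φ (fun i => a * x i + b * y i) : K)) = a * φ x + b * φ y := by
    intro a b hab x y
    have hab' : (∑ k, (![a, b]) k) = 1 := by
      rw [Fin.sum_univ_two]
      exact Subtype.ext (by simpa using hab)
    have := H 2 ![a, b] hab' ![x, y]
    have h1 : (fun i => ∑ k, (![a, b]) k * (![x, y]) k i)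
        = fun i => a * x i + b * y i := by
      funext i; simp [Fin.sum_univ_two]
    rw [h1] at this
    have := congrArg (Subtype.val) this
    simpa [Fin.sum_univ_two] using this
  -- scaling, for t ≤ 1
  have hsmul_le : ∀ t : {c : K // 0 ≤ c}, (t : K) ≤ 1 → ∀ x : Fin n → {c : K // 0 ≤ c},
      ((φ (fun i => t * x i) : K)) = t * φ x + (1 - (t : K)) * φ 0 := by
    intro t ht x
    have hs : (0 : K) ≤ 1 - t := by linarith
    have := hpair t ⟨1 - t, hs⟩ (by simp) x 0
    simpa using this
  -- scaling, general
  have hsmul : ∀ t : {c : K // 0 ≤ c}, ∀ x : Fin n → {c : K // 0 ≤ c},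
      ((φ (fun i => t * x i) : K)) = t * φ x + (1 - (t : K)) * φ 0 := by
    intro t x
    rcases le_or_gt (t : K) 1 with ht | ht
    · exact hsmul_le t ht x
    · have ht0 : (t : K) ≠ 0 := by positivity
      have htinv : (0 : K) ≤ (t : K)⁻¹ := by positivity
      have hle : ((⟨(t : K)⁻¹, htinv⟩ : {c : K // 0 ≤ c}) : K) ≤ 1 := by
        simp only
        rw [inv_le_one_iff₀]; right; linarith
      have key := hsmul_le ⟨(t : K)⁻¹, htinv⟩ hle (fun i => t * x i)
      have hx : (fun i => (⟨(t : K)⁻¹, htinv⟩ : {c : K // 0 ≤ c}) * (t * x i)) = x := by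
        funext i
        exact Subtype.ext (by simp [← mul_assoc, inv_mul_cancel₀ ht0])
      rw [hx] at key
      simp only at key
      have := congrArg (fun z => (t : K) * z) key
      field_simp at this ⊢
      linarith [this]
  -- additivity
  have hadd : ∀ x y : Fin n → {c : K // 0 ≤ c},
      ((φ (x + y) : K)) = φ x + φ y - φ 0 := by
    intro x y
    have h2 : (0 : K) ≤ 1 / 2 := by norm_num
    have h1 := hpair ⟨1 / 2, h2⟩ ⟨1 / 2, h2⟩ (by norm_num) x y
    have key : (fun i => (⟨1 / 2, h2⟩ : {c : K // 0 ≤ c}) * x i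
          + (⟨1 / 2, h2⟩ : {c : K // 0 ≤ c}) * y i)
        = fun i => (⟨1 / 2, h2⟩ : {c : K // 0 ≤ c}) * (x + y) i := by
      funext i
      exact Subtype.ext (by push_cast [Pi.add_apply]; ring)
    rw [key] at h1
    have h3 := hsmul ⟨1 / 2, h2⟩ (x + y)
    rw [h3] at h1
    simp only at h1
    norm_num at h1
    linarith
  -- additivity over finite sums
  have hsum : ∀ (v : Fin n → (Fin n → {c : K // 0 ≤ c})) (s : Finset (Fin n)),
      ((φ (∑ i ∈ s, v i) : K)) = ∑ i ∈ s, ((φ (v i) : K) - φ 0) + φ 0 := by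
    intro v s
    induction s using Finset.cons_induction with
    | empty => simp
    | cons a s ha ih =>
      rw [Finset.sum_cons, Finset.sum_cons, hadd, ih]
      ring
  -- basis vectors
  set e : Fin n → (Fin n → {c : K // 0 ≤ c}) := fun i => Pi.single i 1 with he
  -- coefficients are nonnegative (Archimedean)
  have huK : ∀ i, (0 : K) ≤ (φ (e i) : K) - φ 0 := by
    intro i
    by_contra hneg
    push_neg at hneg
    have hd : (0 : K) < (φ 0 : K) - φ (e i) := by linarith
    have hm : ∀ m : ℕ, (m : K) * ((φ 0 : K) - φ (e i)) ≤ φ 0 := by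
      intro m
      have hm0 : (0 : K) ≤ (m : K) := Nat.cast_nonneg m
      have h4 := hsmul ⟨(m : K), hm0⟩ (e i)
      have hnn : (0 : K) ≤ (φ (fun j => (⟨(m : K), hm0⟩ : {c : K // 0 ≤ c}) * e i j) : K) :=
        (φ _).2
      rw [h4] at hnn
      simp only at hnn
      nlinarith
    obtain ⟨m, hm'⟩ := Archimedean.arch ((φ 0 : K)) hd
    rw [nsmul_eq_mul] at hm'
    have h1 := hm (m + 1)
    push_cast at h1
    nlinarith
  refine ⟨φ 0, fun i => ⟨(φ (e i) : K) - φ 0, huK i⟩, fun x => ?_⟩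
  apply Subtype.ext
  have hx : x = ∑ i, (fun j => x i * e i j) := by
    funext j
    rw [Finset.sum_apply]
    simp only [he, Pi.single_apply, mul_ite, mul_one, mul_zero]
    simp
  have hvi : ∀ i, (φ (fun j => x i * e i j) : K)
      = (x i : K) * φ (e i) + (1 - (x i : K)) * φ 0 := fun i => hsmul (x i) (e i)
  calc (φ x : K) = (φ (∑ i, fun j => x i * e i j) : K) := by rw [← hx]
    _ = ∑ i, ((φ (fun j => x i * e i j) : K) - φ 0) + φ 0 := hsum _ _
    _ = ∑ i, (x i : K) * ((φ (e i) : K) - φ 0) + φ 0 := by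
        congr 1
        refine Finset.sum_congr rfl fun i _ => ?_
        rw [hvi i]; ring
    _ = ((φ 0 + ∑ i, (⟨(φ (e i) : K) - φ 0, huK i⟩ : {c : K // 0 ≤ c}) * x i
          : {c : K // 0 ≤ c}) : K) := by
        rw [Nonneg.coe_add, stmt2_coe_sum]
        simp only [Nonneg.coe_mul]
        rw [add_comm]
        congr 1
        exact Finset.sum_congr rfl fun i _ => mul_comm _ _

end Aux

/-- For an Archimedean linearly ordered field `K` with nonnegative cone
`K₊ = {c : K // 0 ≤ c}`, a function `φ : K₊^n → K₊` preserves `K₊`-convex combinations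
iff it is of the form `x ↦ u₀ + ∑ i, u i * x i` for a (unique) pair `(u₀, u)` with
entries in `K₊`. -/
theorem stmt2 {K : Type*} [Field K] [LinearOrder K] [IsStrictOrderedRing K] [Archimedean K] (n : ℕ)
    (φ : (Fin n → {c : K // 0 ≤ c}) → {c : K // 0 ≤ c}) :
    ((∀ (j : ℕ) (a : Fin j → {c : K // 0 ≤ c}), (∑ k, a k) = 1 →
        ∀ x : Fin j → (Fin n → {c : K // 0 ≤ c}),
          φ (fun i => ∑ k, a k * x k i) = ∑ k, a k * φ (x k)) ↔
      ∃ (u₀ : {c : K // 0 ≤ c}) (u : Fin n → {c : K // 0 ≤ c}),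
        ∀ x, φ x = u₀ + ∑ i, u i * x i) ∧
    (∀ (u₀ : {c : K // 0 ≤ c}) (u : Fin n → {c : K // 0 ≤ c})
        (u₀' : {c : K // 0 ≤ c}) (u' : Fin n → {c : K // 0 ≤ c}),
      (∀ x, φ x = u₀ + ∑ i, u i * x i) →
      (∀ x, φ x = u₀' + ∑ i, u' i * x i) →
      u₀ = u₀' ∧ u = u') := by
  constructor
  · constructor
    · exact stmt2_main φ
    · rintro ⟨u₀, u, hu⟩ j a ha x
      rw [hu]
      have h1 : ∀ k, φ (x k) = u₀ + ∑ i, u i * x k i := fun k => hu (x k)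
      simp only [h1, mul_add, Finset.sum_add_distrib]
      congr 1
      · rw [← Finset.sum_mul, ha, one_mul]
      · simp only [Finset.mul_sum]
        rw [Finset.sum_comm]
        exact Finset.sum_congr rfl fun k _ => Finset.sum_congr rfl fun i _ => by ring
  · intro u₀ u u₀' u' h h'
    have h0 : u₀ = u₀' := by
      have := (h 0).symm.trans (h' 0)
      simpa using this
    refine ⟨h0, funext fun i => ?_⟩
    have heq := (h (Pi.single i 1)).symm.trans (h' (Pi.single i 1))
    have hs : ∀ w : Fin n → {c : K // 0 ≤ c},
        (∑ j, w j * (Pi.single i 1 : Fin n → {c : K // 0 ≤ c}) j) = w i := by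
      intro w
      rw [Finset.sum_eq_single i]
      · simp
      · intro b _ hb; simp [Pi.single_apply, hb]
      · intro hi; exact absurd (Finset.mem_univ i) hi
    rw [hs u, hs u', h0] at heq
    exact add_left_cancel heq
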